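/- arXiv:1709.05942 — 3 statements merged into one kernel-verified Lean document; each statement's English description precedes it below -/
import Mathlib

section
/- Let λ = nϖ_i for a positive integer n, and let q ∈ V be any vector. If w ∈ W^P and α_j is a simple root such that s_j w ∈ W^P, then ⟨wλ − q, ϖ̌_i⟩ ≠ ⟨s_j wλ − q, ϖ̌_i⟩ if and only if j = i. -/
/-- A finite crystallographic root system `Φ` spanning a finite-dimensional real vector space
`V`, together with a fixed base of simple roots `α k`, `k : ι`.  The coroot of a root `β` is
recorded as a linear form `coroot β` on `V` (its values off `Φ` are junk). -/
structure RootSystemBase (ι V : Type) [Fintype ι] [DecidableEq ι]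
    [AddCommGroup V] [Module ℝ V] [FiniteDimensional ℝ V] where
  /-- the set of roots -/
  Φ : Set V
  finite : Φ.Finite
  spanning : Submodule.span ℝ Φ = ⊤
  /-- the simple roots -/
  α : ι → V
  /-- the coroot `β̌` of each root `β`, viewed as a linear form `⟨·, β̌⟩` on `V` -/
  coroot : V → Module.Dual ℝ V
  simple_mem : ∀ k, α k ∈ Φ
  simple_indep : LinearIndependent ℝ α
  coroot_self : ∀ β ∈ Φ, coroot β β = 2
  reflect_mem : ∀ β ∈ Φ, ∀ γ ∈ Φ, γ - coroot β γ • β ∈ Φ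
  crystallographic : ∀ β ∈ Φ, ∀ γ ∈ Φ, ∃ z : ℤ, coroot β γ = (z : ℝ)
  /-- every root is a non-negative or non-positive integral combination of the simple roots -/
  simple_base : ∀ β ∈ Φ,
    (∃ c : ι → ℕ, β = ∑ k, (c k : ℝ) • α k) ∨ (∃ c : ι → ℕ, β = -(∑ k, (c k : ℝ) • α k))

namespace RootSystemBase

variable {ι V : Type} [Fintype ι] [DecidableEq ι]
  [AddCommGroup V] [Module ℝ V] [FiniteDimensional ℝ V]
  (D : RootSystemBase ι V)

/-- the simple reflection `s k` associated with the simple root `α k` -/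
noncomputable def s (k : ι) : V ≃ₗ[ℝ] V :=
  Module.reflection (D.coroot_self (D.α k) (D.simple_mem k))

/-- the product `s k₁ * ⋯ * s kₘ` of the word `l = [k₁, …, kₘ]` in the simple reflections -/
noncomputable def wordProd (l : List ι) : V ≃ₗ[ℝ] V := (l.map D.s).prod

/-- membership in the Weyl group `W`, the group generated by the simple reflections -/
def IsWeyl (w : V ≃ₗ[ℝ] V) : Prop := ∃ l : List ι, D.wordProd l = w

/-- the length `ℓ(w)` of an element of the Weyl group -/
noncomputable def len (w : V ≃ₗ[ℝ] V) : ℕ :=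
  sInf {n | ∃ l : List ι, D.wordProd l = w ∧ l.length = n}

/-- a word in the simple reflections is reduced if its length is the length of its product -/
def IsRed (l : List ι) : Prop := D.len (D.wordProd l) = l.length

/-- the Bruhat order: `u ≤ w` iff some reduced word for `w` contains a subword which is a
reduced word for `u` -/
def BruhatLE (u w : V ≃ₗ[ℝ] V) : Prop :=
  ∃ l : List ι, D.IsRed l ∧ D.wordProd l = w ∧
    ∃ l' : List ι, l'.Sublist l ∧ D.IsRed l' ∧ D.wordProd l' = u

/-- the maximal standard parabolic subgroup `W_P` generated by the `s j` with `j ≠ i` -/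
def WP (i : ι) : Subgroup (V ≃ₗ[ℝ] V) :=
  Subgroup.closure {g | ∃ k, k ≠ i ∧ g = D.s k}

/-- the set `W^P` of minimal-length representatives of the left cosets `w W_P` -/
def WPmin (i : ι) : Set (V ≃ₗ[ℝ] V) :=
  {w | D.IsWeyl w ∧ ∀ u ∈ D.WP i, D.len w ≤ D.len (w * u)}

/-- `W^P(k)`: the set of elements of `W^P` admitting a reduced expression in which the
generator `s i` occurs at most `k` times (empty for `k < 0`) -/
def WPle (i : ι) (k : ℤ) : Set (V ≃ₗ[ℝ] V) :=
  {w | w ∈ D.WPmin i ∧ ∃ l : List ι, D.IsRed l ∧ D.wordProd l = w ∧ (l.count i : ℤ) ≤ k}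

end RootSystemBase

namespace RootSystemBase

open Module Set

variable {ι V : Type} [Fintype ι] [DecidableEq ι]
  [AddCommGroup V] [Module ℝ V] [FiniteDimensional ℝ V]
  (D : RootSystemBase ι V)

lemma zero_not_mem : (0 : V) ∉ D.Φ := by
  intro h
  have h2 := D.coroot_self 0 h
  rw [map_zero] at h2
  norm_num at h2

lemma ne_zero_of_mem {β : V} (hβ : β ∈ D.Φ) : β ≠ 0 := fun h => D.zero_not_mem (h ▸ hβ)

lemma span_alpha : ⊤ ≤ Submodule.span ℝ (Set.range D.α) := by
  rw [← D.spanning]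
  refine Submodule.span_le.mpr fun β hβ => ?_
  rcases D.simple_base β hβ with ⟨c, hc⟩ | ⟨c, hc⟩
  · rw [hc]
    exact Submodule.sum_mem _ fun k _ =>
      Submodule.smul_mem _ _ (Submodule.subset_span ⟨k, rfl⟩)
  · rw [hc]
    exact Submodule.neg_mem _ (Submodule.sum_mem _ fun k _ =>
      Submodule.smul_mem _ _ (Submodule.subset_span ⟨k, rfl⟩))

/-- the simple roots as a basis -/
noncomputable def bα : Basis ι ℝ V := Basis.mk D.simple_indep D.span_alpha

@[simp] lemma bα_apply (k : ι) : D.bα k = D.α k := Basis.mk_apply _ _ _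

lemma repr_sum (c : ι → ℝ) (k : ι) : D.bα.repr (∑ j, c j • D.α j) k = c k := by
  have h : (∑ j, c j • D.α j) = ∑ j, c j • D.bα j := by simp
  rw [h, D.bα.repr_sum_self]

lemma s_apply (k : ι) (v : V) : D.s k v = v - D.coroot (D.α k) v • D.α k :=
  Module.reflection_apply _ _

lemma s_alpha_self (k : ι) : D.s k (D.α k) = - D.α k :=
  Module.reflection_apply_self _

lemma s_mul_self (k : ι) : D.s k * D.s k = 1 := by
  ext v
  exact Module.involutive_reflection (D.coroot_self (D.α k) (D.simple_mem k)) v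

/-- the Weyl group as a subgroup -/
def Wgrp : Subgroup (V ≃ₗ[ℝ] V) := Subgroup.closure (Set.range D.s)

lemma s_mem_Wgrp (k : ι) : D.s k ∈ D.Wgrp := Subgroup.subset_closure ⟨k, rfl⟩

lemma wordProd_nil : D.wordProd [] = 1 := rfl

lemma wordProd_cons (k : ι) (l : List ι) :
    D.wordProd (k :: l) = D.s k * D.wordProd l := by
  simp [wordProd, List.prod_cons]

lemma wordProd_mem (l : List ι) : D.wordProd l ∈ D.Wgrp := by
  induction l with
  | nil => rw [D.wordProd_nil]; exact one_mem _
  | cons k l ih => rw [D.wordProd_cons]; exact mul_mem (D.s_mem_Wgrp k) ih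

lemma isWeyl_mem {w : V ≃ₗ[ℝ] V} (h : D.IsWeyl w) : w ∈ D.Wgrp := by
  obtain ⟨l, rfl⟩ := h; exact D.wordProd_mem l

lemma bijOn_of_mem {w : V ≃ₗ[ℝ] V} (hw : w ∈ D.Wgrp) : Set.BijOn w D.Φ D.Φ := by
  refine Subgroup.closure_induction ?_ ?_ ?_ ?_ hw
  · rintro x ⟨k, rfl⟩
    refine (D.finite.injOn_iff_bijOn_of_mapsTo ?_).mp ((D.s k).injective.injOn)
    intro γ hγ
    rw [D.s_apply]
    exact D.reflect_mem _ (D.simple_mem k) γ hγ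
  · simpa using Set.bijOn_id D.Φ
  · intro x y _ _ hx hy
    have : ⇑(x * y) = ⇑x ∘ ⇑y := rfl
    rw [this]
    exact hx.comp hy
  · intro x _ hx
    refine hx.symm ⟨fun v _ => ?_, fun v _ => ?_⟩
    · show x (x⁻¹ v) = v
      have h : x (x⁻¹ v) = (x * x⁻¹) v := rfl
      rw [h, mul_inv_cancel]; rfl
    · show x⁻¹ (x v) = v
      have h : x⁻¹ (x v) = (x⁻¹ * x) v := rfl
      rw [h, inv_mul_cancel]; rfl

lemma mapsTo_of_mem {w : V ≃ₗ[ℝ] V} (hw : w ∈ D.Wgrp) : Set.MapsTo w D.Φ D.Φ :=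
  (D.bijOn_of_mem hw).mapsTo

lemma Wgrp_finite : (D.Wgrp : Set (V ≃ₗ[ℝ] V)).Finite := by
  have hΦ : D.Φ.Finite := D.finite
  have : Finite ↥D.Φ := hΦ.to_subtype
  apply Set.Finite.of_finite_image
    (f := fun (w : V ≃ₗ[ℝ] V) (x : ↥D.Φ) => w (x : V))
  · refine Set.Finite.subset (Set.Finite.pi' (fun _ : ↥D.Φ => hΦ)) ?_
    rintro f ⟨w, hw, rfl⟩
    intro x
    exact D.mapsTo_of_mem hw x.2
  · intro w hw w' hw' h
    apply LinearEquiv.toLinearMap_injective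
    apply LinearMap.ext_on D.spanning
    intro x hx
    exact congrFun h ⟨x, hx⟩

end RootSystemBase
namespace RootSystemBase

open Module Set

variable {ι V : Type} [Fintype ι] [DecidableEq ι]
  [AddCommGroup V] [Module ℝ V] [FiniteDimensional ℝ V]
  (D : RootSystemBase ι V)

/-- the Weyl group as a finset -/
noncomputable def WFin : Finset (V ≃ₗ[ℝ] V) := D.Wgrp_finite.toFinset

lemma mem_WFin {w : V ≃ₗ[ℝ] V} : w ∈ D.WFin ↔ w ∈ D.Wgrp := D.Wgrp_finite.mem_toFinset

/-- an auxiliary positive definite bilinear form -/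
noncomputable def B0 : V →ₗ[ℝ] V →ₗ[ℝ] ℝ :=
  LinearMap.mk₂ ℝ (fun v u => ∑ k, D.bα.repr v k * D.bα.repr u k)
    (by intros m₁ m₂ n; simp [map_add, add_mul, Finset.sum_add_distrib])
    (by intros c m n; simp [map_smul, smul_eq_mul, mul_assoc, Finset.mul_sum])
    (by intros m n₁ n₂; simp [map_add, mul_add, Finset.sum_add_distrib])
    (by intros c m n; simp [map_smul, smul_eq_mul, Finset.mul_sum, mul_left_comm])

lemma B0_apply (v u : V) : D.B0 v u = ∑ k, D.bα.repr v k * D.bα.repr u k := rfl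

lemma B0_nonneg (v : V) : 0 ≤ D.B0 v v :=
  Finset.sum_nonneg fun k _ => mul_self_nonneg _

lemma B0_pos {v : V} (hv : v ≠ 0) : 0 < D.B0 v v := by
  rw [B0_apply]
  have h : ∃ k, D.bα.repr v k ≠ 0 := by
    by_contra hcon
    push_neg at hcon
    apply hv
    have : D.bα.repr v = 0 := Finsupp.ext hcon
    simpa [this] using (D.bα.repr.symm_apply_apply v).symm
  obtain ⟨k, hk⟩ := h
  exact Finset.sum_pos' (fun j _ => mul_self_nonneg _)
    ⟨k, Finset.mem_univ k, mul_self_pos.mpr hk⟩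

/-- the Weyl-invariant positive definite bilinear form -/
noncomputable def Bf : V →ₗ[ℝ] V →ₗ[ℝ] ℝ :=
  LinearMap.mk₂ ℝ (fun v u => ∑ g ∈ D.WFin, D.B0 (g v) (g u))
    (by intros m₁ m₂ n; simp [map_add, Finset.sum_add_distrib])
    (by intros c m n; simp [map_smul, Finset.mul_sum])
    (by intros m n₁ n₂; simp [map_add, Finset.sum_add_distrib])
    (by intros c m n; simp [map_smul, Finset.mul_sum])

lemma Bf_apply (v u : V) : D.Bf v u = ∑ g ∈ D.WFin, D.B0 (g v) (g u) := rfl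

lemma Bf_pos {v : V} (hv : v ≠ 0) : 0 < D.Bf v v := by
  rw [Bf_apply]
  refine Finset.sum_pos' (fun g _ => D.B0_nonneg _) ⟨1, ?_, ?_⟩
  · exact D.mem_WFin.mpr (one_mem _)
  · show (0:ℝ) < D.B0 ((1 : V ≃ₗ[ℝ] V) v) ((1 : V ≃ₗ[ℝ] V) v)
    have h1 : (1 : V ≃ₗ[ℝ] V) v = v := rfl
    rw [h1]
    exact D.B0_pos hv

lemma Bf_inv {h : V ≃ₗ[ℝ] V} (hh : h ∈ D.Wgrp) (v u : V) :
    D.Bf (h v) (h u) = D.Bf v u := by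
  rw [Bf_apply, Bf_apply]
  refine Finset.sum_nbij' (fun g => g * h) (fun g => g * h⁻¹) ?_ ?_ ?_ ?_ ?_
  · intro g hg
    exact D.mem_WFin.mpr (mul_mem (D.mem_WFin.mp hg) hh)
  · intro g hg
    exact D.mem_WFin.mpr (mul_mem (D.mem_WFin.mp hg) (inv_mem hh))
  · intro g _; group
  · intro g _; group
  · intro g _
    rfl

end RootSystemBase
namespace RootSystemBase

open Module Set

variable {ι V : Type} [Fintype ι] [DecidableEq ι]
  [AddCommGroup V] [Module ℝ V] [FiniteDimensional ℝ V]
  (D : RootSystemBase ι V)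

lemma two_B_eq (k : ι) (v : V) :
    2 * D.Bf (D.α k) v = D.coroot (D.α k) v * D.Bf (D.α k) (D.α k) := by
  set f := D.coroot (D.α k) with hf
  set y := D.α k with hy
  have hfy : f y = 2 := D.coroot_self _ (D.simple_mem k)
  set v0 : V := v - (f v / 2) • y with hv0
  have hker : f v0 = 0 := by
    rw [hv0, map_sub, map_smul, hfy, smul_eq_mul]; ring
  have hfix : D.s k v0 = v0 := by
    rw [D.s_apply, ← hf, ← hy, hker, zero_smul, sub_zero]
  have horth : D.Bf y v0 = 0 := by
    have h1 := D.Bf_inv (D.s_mem_Wgrp k) y v0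
    rw [hfix, D.s_alpha_self, ← hy] at h1
    have h2 : D.Bf (-y) v0 = -(D.Bf y v0) := by
      rw [map_neg]; rfl
    rw [h2] at h1
    linarith
  have hsplit : D.Bf y v = D.Bf y v0 + (f v / 2) * D.Bf y y := by
    have hv : v = v0 + (f v / 2) • y := by rw [hv0]; abel
    conv_lhs => rw [hv]
    simp [map_add, map_smul, smul_eq_mul]
  rw [hsplit, horth]
  ring

lemma Baa_pos (k : ι) : 0 < D.Bf (D.α k) (D.α k) :=
  D.Bf_pos (D.ne_zero_of_mem (D.simple_mem k))

lemma coroot_unique {β : V} (hβ : β ∈ D.Φ) {f : Module.Dual ℝ V} (hf : f β = 2)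
    (hmaps : Set.MapsTo (Module.preReflection β f) D.Φ D.Φ) : f = D.coroot β := by
  refine Module.Dual.eq_of_preReflection_mapsTo D.finite D.spanning
    hf hmaps (D.coroot_self β hβ) ?_
  intro γ hγ
  rw [Module.preReflection_apply]
  exact D.reflect_mem β hβ γ hγ

lemma preReflection_coroot_mapsTo {β : V} (hβ : β ∈ D.Φ) :
    Set.MapsTo (Module.preReflection β (D.coroot β)) D.Φ D.Φ := by
  intro γ hγ
  rw [Module.preReflection_apply]
  exact D.reflect_mem β hβ γ hγ

lemma neg_mem_Phi {β : V} (hβ : β ∈ D.Φ) : -β ∈ D.Φ := by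
  have h := D.reflect_mem β hβ β hβ
  rw [D.coroot_self β hβ, two_smul] at h
  have : β - (β + β) = -β := by abel
  rwa [this] at h

lemma reflection_neg {β : V} (hβ : β ∈ D.Φ) (hβ' : -β ∈ D.Φ) :
    Module.reflection (D.coroot_self (-β) hβ') = Module.reflection (D.coroot_self β hβ) := by
  have hcor : (-(D.coroot β) : Module.Dual ℝ V) = D.coroot (-β) := by
    apply D.coroot_unique hβ'
    · rw [LinearMap.neg_apply, map_neg, D.coroot_self β hβ]; ring
    · intro γ hγ
      have : Module.preReflection (-β) (-(D.coroot β)) γ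
          = Module.preReflection β (D.coroot β) γ := by
        rw [Module.preReflection_apply, Module.preReflection_apply,
          LinearMap.neg_apply, neg_smul, smul_neg, neg_neg]
      rw [this, Module.preReflection_apply]
      exact D.reflect_mem β hβ γ hγ
  ext v
  rw [Module.reflection_apply, Module.reflection_apply, ← hcor,
    LinearMap.neg_apply, neg_smul, smul_neg, neg_neg]

lemma conj_reflection {u : V ≃ₗ[ℝ] V} (hu : u ∈ D.Wgrp) {γ : V} (hγ : γ ∈ D.Φ)
    {β : V} (hβ : β ∈ D.Φ) (hβγ : u⁻¹ γ = β) :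
    u⁻¹ * Module.reflection (D.coroot_self γ hγ) * u
      = Module.reflection (D.coroot_self β hβ) := by
  have huinv : ∀ x : V, u⁻¹ (u x) = x := fun x => by
    have h : u⁻¹ (u x) = (u⁻¹ * u) x := rfl
    rw [h, inv_mul_cancel]; rfl
  have huβ : u β = γ := by
    rw [← hβγ]
    have h : u (u⁻¹ γ) = (u * u⁻¹) γ := rfl
    rw [h, mul_inv_cancel]; rfl
  have hcomp : ∀ x : V, (u⁻¹ * Module.reflection (D.coroot_self γ hγ) * u) x
      = x - D.coroot γ (u x) • β := by
    intro x
    have h : (u⁻¹ * Module.reflection (D.coroot_self γ hγ) * u) x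
        = u⁻¹ (Module.reflection (D.coroot_self γ hγ) (u x)) := rfl
    rw [h, Module.reflection_apply, map_sub, map_smul, huinv, hβγ]
  have hcor : (D.coroot γ).comp (u : V →ₗ[ℝ] V) = D.coroot β := by
    apply D.coroot_unique hβ
    · rw [LinearMap.comp_apply]
      have h : (u : V →ₗ[ℝ] V) β = u β := rfl
      rw [h, huβ, D.coroot_self γ hγ]
    · intro x hx
      have h : Module.preReflection β ((D.coroot γ).comp (u : V →ₗ[ℝ] V)) x
          = x - D.coroot γ (u x) • β := by
        rw [Module.preReflection_apply]; rfl
      rw [h, ← hcomp]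
      have h2 : (u⁻¹ * Module.reflection (D.coroot_self γ hγ) * u) x
          = u⁻¹ (Module.reflection (D.coroot_self γ hγ) (u x)) := rfl
      rw [h2, Module.reflection_apply]
      apply D.mapsTo_of_mem (inv_mem hu)
      exact D.reflect_mem γ hγ _ (D.mapsTo_of_mem hu hx)
  ext v
  rw [hcomp v, Module.reflection_apply]
  have h : D.coroot β v = D.coroot γ (u v) := by rw [← hcor]; rfl
  rw [h]

end RootSystemBase
namespace RootSystemBase

open Module Set

variable {ι V : Type} [Fintype ι] [DecidableEq ι]
  [AddCommGroup V] [Module ℝ V] [FiniteDimensional ℝ V]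
  (D : RootSystemBase ι V)

lemma det_s (k : ι) : LinearMap.det ((D.s k : V ≃ₗ[ℝ] V) : V →ₗ[ℝ] V) = -1 := by
  set f := D.coroot (D.α k) with hfdef
  set y := D.α k with hydef
  have hfy : f y = 2 := D.coroot_self _ (D.simple_mem k)
  have hli : ∀ (c : ℝ), ∀ x ∈ LinearMap.ker f, c • y + x = 0 → c = 0 := by
    intro c x hx hcx
    have h := congrArg f hcx
    rw [map_add, map_smul, hfy, LinearMap.mem_ker.mp hx, map_zero, smul_eq_mul] at h
    linarith
  have hsp : ∀ z : V, ∃ c : ℝ, z + c • y ∈ LinearMap.ker f := by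
    intro z
    refine ⟨-(f z) / 2, ?_⟩
    rw [LinearMap.mem_ker, map_add, map_smul, hfy, smul_eq_mul]
    ring
  set bk := Module.finBasis ℝ (LinearMap.ker f) with hbk
  set b := Basis.mkFinCons y bk hli hsp with hb
  have hb0 : b 0 = y := by
    rw [hb]
    rw [show ⇑(Basis.mkFinCons y bk hli hsp) = Fin.cons y ((↑) ∘ bk) from
      Basis.coe_mkFinCons y bk hli hsp]
    rfl
  have hbs : ∀ j, b (Fin.succ j) ∈ LinearMap.ker f := by
    intro j
    rw [hb]
    rw [show ⇑(Basis.mkFinCons y bk hli hsp) = Fin.cons y ((↑) ∘ bk) from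
      Basis.coe_mkFinCons y bk hli hsp]
    simp only [Fin.cons_succ, Function.comp_apply]
    exact (bk j).2
  rw [← LinearMap.det_toMatrix b]
  have hmat : LinearMap.toMatrix b b ((D.s k : V ≃ₗ[ℝ] V) : V →ₗ[ℝ] V)
      = Matrix.diagonal (fun j => if j = 0 then (-1:ℝ) else 1) := by
    ext p q
    rw [LinearMap.toMatrix_apply]
    have hcoe : ((D.s k : V ≃ₗ[ℝ] V) : V →ₗ[ℝ] V) (b q) = D.s k (b q) := rfl
    rw [hcoe]
    induction q using Fin.cases with
    | zero =>
        have hsy : D.s k (b 0) = -(b 0) := by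
          rw [hb0, hydef]; exact D.s_alpha_self k
        rw [hsy, map_neg, Finsupp.neg_apply, Basis.repr_self_apply, Matrix.diagonal_apply]
        by_cases hp : p = 0 <;> simp [hp, eq_comm]
    | succ j =>
        have hfix : D.s k (b (Fin.succ j)) = b (Fin.succ j) := by
          rw [D.s_apply, ← hfdef, ← hydef, LinearMap.mem_ker.mp (hbs j), zero_smul, sub_zero]
        rw [hfix, Basis.repr_self_apply, Matrix.diagonal_apply]
        by_cases hp : p = Fin.succ j
        · subst hp; simp [Fin.succ_ne_zero]
        · simp [hp, Ne.symm hp]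
  rw [hmat, Matrix.det_diagonal, Fin.prod_univ_succ]
  simp [Fin.succ_ne_zero]

lemma det_wordProd (l : List ι) :
    LinearMap.det ((D.wordProd l : V ≃ₗ[ℝ] V) : V →ₗ[ℝ] V) = (-1) ^ l.length := by
  induction l with
  | nil =>
      rw [D.wordProd_nil]
      simp
  | cons k l ih =>
      rw [D.wordProd_cons]
      have h : ((D.s k * D.wordProd l : V ≃ₗ[ℝ] V) : V →ₗ[ℝ] V)
          = ((D.s k : V ≃ₗ[ℝ] V) : V →ₗ[ℝ] V) ∘ₗ ((D.wordProd l : V ≃ₗ[ℝ] V) : V →ₗ[ℝ] V) := rfl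
      rw [h, LinearMap.det_comp, D.det_s, ih, List.length_cons, pow_succ]
      ring

lemma det_of_isWeyl {w : V ≃ₗ[ℝ] V} (hw : D.IsWeyl w) :
    LinearMap.det ((w : V ≃ₗ[ℝ] V) : V →ₗ[ℝ] V) = (-1) ^ (D.len w) := by
  have hne : {n | ∃ l : List ι, D.wordProd l = w ∧ l.length = n}.Nonempty := by
    obtain ⟨l, hl⟩ := hw
    exact ⟨l.length, l, hl, rfl⟩
  have hmem : D.len w ∈ {n | ∃ l : List ι, D.wordProd l = w ∧ l.length = n} :=
    Nat.sInf_mem hne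
  obtain ⟨l, hl, hlen⟩ := hmem
  have h := D.det_wordProd l
  rw [hl, hlen] at h
  exact h

end RootSystemBase
namespace RootSystemBase

open Module Set

variable {ι V : Type} [Fintype ι] [DecidableEq ι]
  [AddCommGroup V] [Module ℝ V] [FiniteDimensional ℝ V]
  (D : RootSystemBase ι V)

lemma s_mem_WP {i k : ι} (hk : k ≠ i) : D.s k ∈ D.WP i :=
  Subgroup.subset_closure ⟨k, hk, rfl⟩

lemma s_inv (k : ι) : (D.s k)⁻¹ = D.s k := by
  rw [inv_eq_iff_mul_eq_one]
  exact D.s_mul_self k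

lemma reflection_mem_WP (i : ι) :
    ∀ N : ℕ, ∀ c : ι → ℕ, ∀ β, ∀ hβ : β ∈ D.Φ, (∑ k, c k) = N → c i = 0 →
      β = ∑ k, (c k : ℝ) • D.α k →
      Module.reflection (D.coroot_self β hβ) ∈ D.WP i := by
  intro N
  induction N using Nat.strong_induction_on with
  | _ N IH =>
  intro c β hβ hN hci hrep
  have hβ0 : β ≠ 0 := D.ne_zero_of_mem hβ
  have hpos : 0 < D.Bf β β := D.Bf_pos hβ0
  have hsum : D.Bf β β = ∑ k, (c k : ℝ) * D.Bf (D.α k) β := by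
    nth_rewrite 1 [hrep]
    simp only [map_sum, LinearMap.sum_apply, map_smul, LinearMap.smul_apply, smul_eq_mul]
  have hex : ∃ k, 0 < (c k : ℝ) * D.Bf (D.α k) β := by
    by_contra hcon
    push_neg at hcon
    have h := Finset.sum_nonpos (fun k (_ : k ∈ Finset.univ) => hcon k)
    rw [← hsum] at h
    linarith
  obtain ⟨k, hk⟩ := hex
  have hck : 0 < c k := by
    rcases Nat.eq_zero_or_pos (c k) with h | h
    · rw [h] at hk; norm_num at hk
    · exact h
  have hBk : 0 < D.Bf (D.α k) β := by
    have hc : (0:ℝ) < (c k : ℝ) := by exact_mod_cast hck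
    nlinarith
  have hki : k ≠ i := by
    intro h
    rw [h, hci] at hck
    exact lt_irrefl 0 hck
  set m := D.coroot (D.α k) β with hm
  have hmpos : 0 < m := by
    have h2 := D.two_B_eq k β
    have hkk := D.Baa_pos k
    nlinarith
  have hγΦ : β - m • D.α k ∈ D.Φ := D.reflect_mem (D.α k) (D.simple_mem k) β hβ
  set γ := β - m • D.α k with hγdef
  -- coefficients of γ in the basis
  have hreprβ : ∀ j, D.bα.repr β j = (c j : ℝ) := by
    intro j; rw [hrep]; exact D.repr_sum _ j
  have hreprγ : ∀ j, D.bα.repr γ j = (c j : ℝ) - (if k = j then m else 0) := by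
    intro j
    rw [hγdef, map_sub, Finsupp.sub_apply, hreprβ, map_smul, Finsupp.smul_apply]
    have h : D.bα.repr (D.α k) j = if k = j then 1 else 0 := by
      rw [← D.bα_apply, Basis.repr_self_apply]
    rw [h]
    by_cases hkj : k = j <;> simp [hkj]
  -- s k γ = β
  have hsγ : D.s k γ = β := by
    rw [D.s_apply]
    have hcorγ : D.coroot (D.α k) γ = -m := by
      rw [hγdef, map_sub, map_smul, D.coroot_self _ (D.simple_mem k), ← hm, smul_eq_mul]
      ring
    rw [hcorγ, hγdef, neg_smul, sub_neg_eq_add]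
    abel
  rcases D.simple_base γ hγΦ with ⟨d, hd⟩ | ⟨d, hd⟩
  · -- positive case: use induction
    have hreprγ' : ∀ j, D.bα.repr γ j = (d j : ℝ) := by
      intro j; rw [hd]; exact D.repr_sum _ j
    have hdj : ∀ j, j ≠ k → d j = c j := by
      intro j hj
      have h1 := hreprγ j
      rw [hreprγ' j, if_neg (fun h => hj h.symm), sub_zero] at h1
      exact_mod_cast h1
    have hdk : (d k : ℝ) = (c k : ℝ) - m := by
      have h1 := hreprγ k
      rw [hreprγ' k, if_pos rfl] at h1
      exact h1
    have hdi : d i = 0 := by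
      rw [hdj i (Ne.symm hki), hci]
    have hlt : (∑ j, d j) < N := by
      rw [← hN]
      refine Finset.sum_lt_sum (fun j _ => ?_) ⟨k, Finset.mem_univ k, ?_⟩
      · by_cases hj : j = k
        · subst hj
          have : (d j : ℝ) < (c j : ℝ) := by rw [hdk]; linarith
          exact le_of_lt (by exact_mod_cast this)
        · rw [hdj j hj]
      · have : (d k : ℝ) < (c k : ℝ) := by rw [hdk]; linarith
        exact_mod_cast this
    have hmem := IH _ hlt d γ hγΦ rfl hdi hd
    have hconj := D.conj_reflection (D.s_mem_Wgrp k) hγΦ hβ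
      (by rw [D.s_inv]; exact hsγ)
    rw [← hconj]
    exact mul_mem (mul_mem (inv_mem (D.s_mem_WP hki)) hmem) (D.s_mem_WP hki)
  · -- negative case: β is a multiple of α k, so the reflection is s k
    have hcj : ∀ j, j ≠ k → c j = 0 := by
      intro j hj
      have h1 := hreprγ j
      rw [hd] at h1
      rw [map_neg, Finsupp.neg_apply, D.repr_sum] at h1
      rw [if_neg (fun h => hj h.symm), sub_zero] at h1
      have h2 : (0:ℝ) ≤ (c j : ℝ) := by positivity
      have h3 : (0:ℝ) ≤ (d j : ℝ) := by positivity
      have : (c j : ℝ) = 0 := by linarith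
      exact_mod_cast this
    have hβck : β = (c k : ℝ) • D.α k := by
      rw [hrep]
      rw [Finset.sum_eq_single k]
      · intro j _ hj
        rw [hcj j hj]; simp
      · intro h; exact absurd (Finset.mem_univ k) h
    have hck0 : (c k : ℝ) ≠ 0 := by
      intro h
      apply hβ0
      rw [hβck, h, zero_smul]
    have heq : Module.reflection (D.coroot_self β hβ) = D.s k := by
      have hcor : ((c k : ℝ) • D.coroot β : Module.Dual ℝ V) = D.coroot (D.α k) := by
        apply D.coroot_unique (D.simple_mem k)
        · rw [LinearMap.smul_apply, smul_eq_mul]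
          have h2 : D.coroot β β = 2 := D.coroot_self β hβ
          nth_rewrite 2 [hβck] at h2
          rw [map_smul, smul_eq_mul] at h2
          exact h2
        · intro x hx
          have h : Module.preReflection (D.α k) ((c k : ℝ) • D.coroot β) x
              = x - D.coroot β x • β := by
            rw [Module.preReflection_apply, LinearMap.smul_apply, smul_eq_mul, hβck,
              smul_smul, mul_comm]
          rw [h]
          exact D.reflect_mem β hβ x hx
      ext v
      show v - D.coroot β v • β = D.s k v
      rw [D.s_apply, ← hcor, LinearMap.smul_apply, smul_eq_mul, hβck, smul_smul, mul_comm]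
    rw [heq]
    exact D.s_mem_WP hki

end RootSystemBase

namespace RootSystemBase

open Module Set

variable {ι V : Type} [Fintype ι] [DecidableEq ι]
  [AddCommGroup V] [Module ℝ V] [FiniteDimensional ℝ V]
  (D : RootSystemBase ι V)

lemma coroot_w_ne_zero (i : ι) (ϖ : V)
    (hϖ : ∀ k, D.coroot (D.α k) ϖ = if k = i then 1 else 0)
    {w : V ≃ₗ[ℝ] V} (hw : w ∈ D.WPmin i) (hiw : D.s i * w ∈ D.WPmin i) :
    D.coroot (D.α i) (w ϖ) ≠ 0 := by
  intro hzero
  have hwW : w ∈ D.Wgrp := D.isWeyl_mem hw.1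
  have hβΦ : w⁻¹ (D.α i) ∈ D.Φ := D.mapsTo_of_mem (inv_mem hwW) (D.simple_mem i)
  set β := w⁻¹ (D.α i) with hβdef
  -- B (β, ϖ) = 0
  have hB0 : D.Bf (D.α i) (w ϖ) = 0 := by
    have h := D.two_B_eq i (w ϖ)
    rw [hzero] at h
    linarith
  have hwβ : w β = D.α i := by
    rw [hβdef]
    have h : w (w⁻¹ (D.α i)) = (w * w⁻¹) (D.α i) := rfl
    rw [h, mul_inv_cancel]; rfl
  have hBβ : D.Bf β ϖ = 0 := by
    have h := D.Bf_inv hwW β ϖ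
    rw [hwβ, hB0] at h
    exact h.symm
  -- B (α k, ϖ)
  have hBαϖ : ∀ k, D.Bf (D.α k) ϖ = (if k = i then 1 else 0) * D.Bf (D.α k) (D.α k) / 2 := by
    intro k
    have h := D.two_B_eq k ϖ
    rw [hϖ k] at h
    linarith
  -- expansion of B (β, ϖ) in terms of coefficients
  have hexp : ∀ c : ι → ℕ, (∑ k, (c k : ℝ) • D.α k) = β ∨ (∑ k, (c k : ℝ) • D.α k) = -β →
      (c i : ℝ) * D.Bf (D.α i) (D.α i) / 2 = 0 := by
    intro c hc
    have h1 : D.Bf (∑ k, (c k : ℝ) • D.α k) ϖ = ∑ k, (c k : ℝ) * D.Bf (D.α k) ϖ := by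
      simp only [map_sum, LinearMap.sum_apply, map_smul, LinearMap.smul_apply, smul_eq_mul]
    have h2 : D.Bf (∑ k, (c k : ℝ) • D.α k) ϖ = 0 := by
      rcases hc with hc | hc
      · rw [hc, hBβ]
      · rw [hc, map_neg, LinearMap.neg_apply, hBβ, neg_zero]
    rw [h2] at h1
    have h3 : ∑ k, (c k : ℝ) * D.Bf (D.α k) ϖ
        = (c i : ℝ) * D.Bf (D.α i) (D.α i) / 2 := by
      rw [Finset.sum_eq_single i]
      · rw [hBαϖ i, if_pos rfl]; ring
      · intro j _ hj
        rw [hBαϖ j, if_neg hj]; ring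
      · intro h; exact absurd (Finset.mem_univ i) h
    rw [h3] at h1
    linarith
  -- the reflection in β lies in W_P
  have hrefl : Module.reflection (D.coroot_self β hβΦ) ∈ D.WP i := by
    rcases D.simple_base β hβΦ with ⟨c, hc⟩ | ⟨c, hc⟩
    · have hci : c i = 0 := by
        have h := hexp c (Or.inl hc.symm)
        have hpos := D.Baa_pos i
        have : (c i : ℝ) = 0 := by
          by_contra hne
          have h2 : (0:ℝ) < (c i : ℝ) := lt_of_le_of_ne (by positivity) (Ne.symm hne)
          nlinarith
        exact_mod_cast this
      exact D.reflection_mem_WP i _ c β hβΦ rfl hci hc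
    · have hβ' : -β ∈ D.Φ := D.neg_mem_Phi hβΦ
      have hc' : -β = ∑ k, (c k : ℝ) • D.α k := by rw [hc]; simp
      have hci : c i = 0 := by
        have h := hexp c (Or.inr hc'.symm)
        have hpos := D.Baa_pos i
        have : (c i : ℝ) = 0 := by
          by_contra hne
          have h2 : (0:ℝ) < (c i : ℝ) := lt_of_le_of_ne (by positivity) (Ne.symm hne)
          nlinarith
        exact_mod_cast this
      have hmem : Module.reflection (D.coroot_self (-β) hβ') ∈ D.WP i :=
        D.reflection_mem_WP i _ c (-β) hβ' rfl hci hc'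
      rwa [D.reflection_neg hβΦ hβ'] at hmem
  -- u := w⁻¹ * s i * w ∈ W_P
  have hu : w⁻¹ * D.s i * w = Module.reflection (D.coroot_self β hβΦ) :=
    D.conj_reflection hwW (D.simple_mem i) hβΦ rfl
  set u := w⁻¹ * D.s i * w with hudef
  have huWP : u ∈ D.WP i := by rw [hu]; exact hrefl
  -- length comparison
  have hwu : w * u = D.s i * w := by rw [hudef]; group
  have hswu : (D.s i * w) * u = w := by
    rw [hudef]
    have h : (D.s i * w) * (w⁻¹ * D.s i * w) = (D.s i * D.s i) * w := by group
    rw [h, D.s_mul_self, one_mul]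
  have h1 : D.len w ≤ D.len (D.s i * w) := by
    have h := hw.2 u huWP
    rwa [hwu] at h
  have h2 : D.len (D.s i * w) ≤ D.len w := by
    have h := hiw.2 u huWP
    rwa [hswu] at h
  have hlen : D.len w = D.len (D.s i * w) := le_antisymm h1 h2
  -- parity contradiction
  have hdw := D.det_of_isWeyl hw.1
  have hdsw := D.det_of_isWeyl hiw.1
  have hmul : LinearMap.det ((D.s i * w : V ≃ₗ[ℝ] V) : V →ₗ[ℝ] V)
      = LinearMap.det ((D.s i : V ≃ₗ[ℝ] V) : V →ₗ[ℝ] V)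
        * LinearMap.det ((w : V ≃ₗ[ℝ] V) : V →ₗ[ℝ] V) := by
    have h : ((D.s i * w : V ≃ₗ[ℝ] V) : V →ₗ[ℝ] V)
        = ((D.s i : V ≃ₗ[ℝ] V) : V →ₗ[ℝ] V) ∘ₗ ((w : V ≃ₗ[ℝ] V) : V →ₗ[ℝ] V) := rfl
    rw [h, LinearMap.det_comp]
  rw [hdw, hdsw, D.det_s, ← hlen] at hmul
  have hne : ((-1 : ℝ)) ^ (D.len w) ≠ 0 := pow_ne_zero _ (by norm_num)
  have : ((-1 : ℝ)) ^ (D.len w) = 0 := by linarith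
  exact hne this

end RootSystemBase

open RootSystemBase in
/-- Let `λ = n ϖ_i` with `n` a positive integer and let `q ∈ V`.  If `w ∈ W^P` and `α j` is a
simple root with `s j * w ∈ W^P`, then `⟨wλ − q, ϖ̌_i⟩ ≠ ⟨s_j wλ − q, ϖ̌_i⟩ ↔ j = i`. -/
theorem statement1 {ι V : Type} [Fintype ι] [DecidableEq ι]
    [AddCommGroup V] [Module ℝ V] [FiniteDimensional ℝ V]
    (D : RootSystemBase ι V) (i : ι)
    -- the fundamental weight `ϖ_i`, characterized by `⟨ϖ_i, α̌_k⟩ = δ_{ik}`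
    (ϖ : V) (hϖ : ∀ k, D.coroot (D.α k) ϖ = if k = i then 1 else 0)
    -- the fundamental coweight `ϖ̌_i`, characterized by `⟨α_k, ϖ̌_i⟩ = δ_{ik}`
    (ϖc : Module.Dual ℝ V) (hϖc : ∀ k, ϖc (D.α k) = if k = i then 1 else 0)
    (n : ℕ) (hn : 0 < n) (q : V)
    (w : V ≃ₗ[ℝ] V) (hw : w ∈ D.WPmin i)
    (j : ι) (hjw : D.s j * w ∈ D.WPmin i) :
    ϖc (w ((n : ℝ) • ϖ) - q) ≠ ϖc ((D.s j * w) ((n : ℝ) • ϖ) - q) ↔ j = i := by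
  have hkey : ϖc ((D.s j * w) ((n : ℝ) • ϖ) - q)
      = ϖc (w ((n : ℝ) • ϖ) - q) - D.coroot (D.α j) (w ((n : ℝ) • ϖ)) * ϖc (D.α j) := by
    have h1 : (D.s j * w) ((n : ℝ) • ϖ) = D.s j (w ((n : ℝ) • ϖ)) := rfl
    rw [h1, D.s_apply]
    have h2 : w ((n : ℝ) • ϖ) - D.coroot (D.α j) (w ((n : ℝ) • ϖ)) • D.α j - q
        = (w ((n : ℝ) • ϖ) - q) - D.coroot (D.α j) (w ((n : ℝ) • ϖ)) • D.α j := by abel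
    have h3 : ϖc (D.coroot (D.α j) (w ((n : ℝ) • ϖ)) • D.α j)
        = D.coroot (D.α j) (w ((n : ℝ) • ϖ)) * ϖc (D.α j) := by
      rw [map_smul, smul_eq_mul]
    rw [h2, map_sub, h3]
  constructor
  · intro hne
    by_contra hji
    apply hne
    rw [hkey, hϖc j, if_neg hji]
    ring
  · intro hji
    subst hji
    rw [hkey, hϖc j, if_pos rfl, mul_one]
    have hco : D.coroot (D.α j) (w ((n : ℝ) • ϖ)) ≠ 0 := by
      have h1 : w ((n : ℝ) • ϖ) = (n : ℝ) • (w ϖ) := map_smul w _ _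
      rw [h1, map_smul, smul_eq_mul]
      have h2 := D.coroot_w_ne_zero j ϖ hϖ hw hjw
      have h3 : (n : ℝ) ≠ 0 := by positivity
      exact mul_ne_zero h3 h2
    intro heq
    apply hco
    linarith
end

section
/- Let S be a finite nonempty subset of ℚ^n and let ν ∈ ℚ^n. Then ν lies in the convex hull of S in ℝ^n if and only if for every ξ ∈ ℤ^n there exists χ ∈ S with ⟨χ − ν, ξ⟩ ≤ 0, where ⟨·,·⟩ denotes the standard inner product on ℝ^n. (This is the lattice form of the Hilbert–Mumford criterion for semistability under a torus action: a point with weight support S is semistable for the linearization shifted by the character ν iff ν lies in the weight polytope conv(S).) -/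
/-- **Lattice form of the Hilbert–Mumford criterion for semistability under a torus action.**
Let `S` be a finite nonempty set of rational vectors in `ℚ^n` and `ν ∈ ℚ^n`.  Then `ν` lies
in the convex hull of `S` in `ℝ^n` iff for every integral `ξ ∈ ℤ^n` there is `χ ∈ S` with
`⟨χ − ν, ξ⟩ ≤ 0` for the standard inner product. -/
theorem statement10 (n : ℕ) (S : Finset (Fin n → ℚ)) (hS : S.Nonempty) (ν : Fin n → ℚ) :
    ((fun j => (ν j : ℝ)) ∈
      convexHull ℝ {x : Fin n → ℝ | ∃ χ ∈ S, x = fun j => (χ j : ℝ)}) ↔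
    ∀ ξ : Fin n → ℤ, ∃ χ ∈ S, (∑ j, ((χ j : ℝ) - (ν j : ℝ)) * (ξ j : ℝ)) ≤ 0 := by
  set T : Set (Fin n → ℝ) := {x : Fin n → ℝ | ∃ χ ∈ S, x = fun j => (χ j : ℝ)} with hT
  constructor
  · -- forward direction
    intro hmem ξ
    by_contra hcon
    push_neg at hcon
    have hlin : IsLinearMap ℝ (fun x : Fin n → ℝ => ∑ j, x j * (ξ j : ℝ)) := by
      constructor
      · intro x y
        simp [add_mul, Finset.sum_add_distrib]
      · intro c x
        simp [Finset.mul_sum, mul_assoc]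
    have hconv : Convex ℝ {x : Fin n → ℝ |
        (∑ j, (ν j : ℝ) * (ξ j : ℝ)) < ∑ j, x j * (ξ j : ℝ)} :=
      convex_halfSpace_gt hlin _
    have hsub : T ⊆ {x : Fin n → ℝ |
        (∑ j, (ν j : ℝ) * (ξ j : ℝ)) < ∑ j, x j * (ξ j : ℝ)} := by
      rintro x ⟨χ, hχ, rfl⟩
      have h := hcon χ hχ
      have : (∑ j, ((χ j : ℝ) - (ν j : ℝ)) * (ξ j : ℝ))
          = (∑ j, (χ j : ℝ) * (ξ j : ℝ)) - ∑ j, (ν j : ℝ) * (ξ j : ℝ) := by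
        rw [← Finset.sum_sub_distrib]
        exact Finset.sum_congr rfl fun j _ => by ring
      simp only [Set.mem_setOf_eq]
      linarith [this ▸ h]
    have := convexHull_min hsub hconv hmem
    simp only [Set.mem_setOf_eq] at this
    exact lt_irrefl _ this
  · -- reverse direction
    intro hforall
    by_contra hmem
    have hTfin : T.Finite := by
      have : T = (fun χ : Fin n → ℚ => fun j => ((χ j : ℝ))) '' ↑S := by
        ext x
        simp [hT, eq_comm]
      rw [this]
      exact S.finite_toSet.image _
    obtain ⟨f, u, hfu, hub⟩ :=
      geometric_hahn_banach_point_closed (convex_convexHull ℝ T)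
        (hTfin.isClosed_convexHull (𝕜 := ℝ)) hmem
    set a : Fin n → ℝ := fun j => f (Pi.single j 1) with ha
    have hsingle : ∀ (j : Fin n) (c : ℝ), c • (Pi.single j 1 : Fin n → ℝ) = Pi.single j c := by
      intro j c
      rw [← Pi.single_smul, smul_eq_mul, mul_one]
    have hf : ∀ x : Fin n → ℝ, f x = ∑ j, x j * a j := by
      intro x
      have hx : ∑ j, x j • (Pi.single j 1 : Fin n → ℝ) = x := by
        simp_rw [hsingle]
        exact Finset.univ_sum_single x
      calc f x = f (∑ j, x j • (Pi.single j 1 : Fin n → ℝ)) := by rw [hx]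
        _ = ∑ j, x j * a j := by
            rw [map_sum]
            exact Finset.sum_congr rfl fun j _ => by rw [map_smul, smul_eq_mul]
    set F : (Fin n → ℚ) → ℝ := fun χ => ∑ j, ((χ j : ℝ) - (ν j : ℝ)) * a j with hF
    have hpos : ∀ χ ∈ S, 0 < F χ := by
      intro χ hχ
      have hχT : (fun j => (χ j : ℝ)) ∈ convexHull ℝ T :=
        subset_convexHull ℝ T ⟨χ, hχ, rfl⟩
      have h1 := hub _ hχT
      have h2 : F χ = f (fun j => (χ j : ℝ)) - f (fun j => (ν j : ℝ)) := by
        rw [hf, hf, hF, ← Finset.sum_sub_distrib]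
        exact Finset.sum_congr rfl fun j _ => by ring
      rw [h2]
      linarith
    set ε : ℝ := S.inf' hS F with hε
    have hεpos : 0 < ε := (Finset.lt_inf'_iff hS).mpr hpos
    set B : ℝ := S.sup' hS (fun χ => ∑ j, |(χ j : ℝ) - (ν j : ℝ)|) + 1 with hB
    have hBbound : ∀ χ ∈ S, (∑ j, |(χ j : ℝ) - (ν j : ℝ)|) ≤ B - 1 := by
      intro χ hχ
      have := Finset.le_sup' (fun χ => ∑ j, |(χ j : ℝ) - (ν j : ℝ)|) hχ
      rw [hB]; linarith
    have hBpos : 0 < B := by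
      obtain ⟨χ₀, hχ₀⟩ := hS
      have := hBbound χ₀ hχ₀
      have hnn : (0:ℝ) ≤ ∑ j, |(χ₀ j : ℝ) - (ν j : ℝ)| :=
        Finset.sum_nonneg fun j _ => abs_nonneg _
      linarith
    set δ : ℝ := ε / (2 * B) with hδ
    have hδpos : 0 < δ := div_pos hεpos (by positivity)
    choose q hq using fun j => exists_rat_near (a j) hδpos
    -- key: q separates
    have key : ∀ χ ∈ S, ε / 2 ≤ ∑ j, ((χ j : ℝ) - (ν j : ℝ)) * (q j : ℝ) := by
      intro χ hχ
      have hsplit : (∑ j, ((χ j : ℝ) - (ν j : ℝ)) * (q j : ℝ))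
          = F χ - ∑ j, ((χ j : ℝ) - (ν j : ℝ)) * (a j - (q j : ℝ)) := by
        rw [hF, ← Finset.sum_sub_distrib]
        exact Finset.sum_congr rfl fun j _ => by ring
      have habs : |∑ j, ((χ j : ℝ) - (ν j : ℝ)) * (a j - (q j : ℝ))| ≤ ε / 2 := by
        calc |∑ j, ((χ j : ℝ) - (ν j : ℝ)) * (a j - (q j : ℝ))|
            ≤ ∑ j, |((χ j : ℝ) - (ν j : ℝ)) * (a j - (q j : ℝ))| :=
              Finset.abs_sum_le_sum_abs _ _
          _ ≤ ∑ j, |(χ j : ℝ) - (ν j : ℝ)| * δ := by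
              refine Finset.sum_le_sum fun j _ => ?_
              rw [abs_mul]
              exact mul_le_mul_of_nonneg_left (hq j).le (abs_nonneg _)
          _ = (∑ j, |(χ j : ℝ) - (ν j : ℝ)|) * δ := by rw [Finset.sum_mul]
          _ ≤ B * δ := by
              have h1 := hBbound χ hχ
              have : (∑ j, |(χ j : ℝ) - (ν j : ℝ)|) ≤ B := by linarith
              exact mul_le_mul_of_nonneg_right this hδpos.le
          _ = ε / 2 := by
              rw [hδ]; field_simp
      have hFχ : ε ≤ F χ := Finset.inf'_le F hχ
      have := abs_le.mp habs
      rw [hsplit]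
      linarith
    -- build an integral ξ from q
    set d : ℕ := ∏ j, (q j).den with hd
    have hdpos : 0 < d := Finset.prod_pos fun j _ => (q j).pos
    set ξ : Fin n → ℤ := fun j => (q j).num * ((d / (q j).den : ℕ) : ℤ) with hξ
    have hcast : ∀ j, ((ξ j : ℚ)) = (q j) * d := by
      intro j
      have hdvd : (q j).den ∣ d := Finset.dvd_prod_of_mem _ (Finset.mem_univ j)
      have hmul : ((q j).den : ℚ) * ((d / (q j).den : ℕ) : ℚ) = (d : ℚ) := by
        rw [← Nat.cast_mul, Nat.mul_div_cancel' hdvd]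
      have hnum : ((q j).num : ℚ) = q j * (q j).den :=
        (Rat.mul_den_eq_num (q j)).symm
      calc ((ξ j : ℚ)) = ((q j).num : ℚ) * ((d / (q j).den : ℕ) : ℚ) := by
            simp only [hξ]
            rw [Int.cast_mul, Int.cast_natCast]
        _ = q j * (((q j).den : ℚ) * ((d / (q j).den : ℕ) : ℚ)) := by
            rw [hnum]; ring
        _ = q j * d := by rw [hmul]
    have hcastR : ∀ j, ((ξ j : ℝ)) = (q j : ℝ) * d := by
      intro j
      have := hcast j
      exact_mod_cast congrArg (fun t : ℚ => (t : ℝ)) this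
    obtain ⟨χ, hχ, hle⟩ := hforall ξ
    have hfin : (∑ j, ((χ j : ℝ) - (ν j : ℝ)) * (ξ j : ℝ))
        = (∑ j, ((χ j : ℝ) - (ν j : ℝ)) * (q j : ℝ)) * d := by
      rw [Finset.sum_mul]
      refine Finset.sum_congr rfl fun j _ => ?_
      rw [hcastR j]; ring
    have hk := key χ hχ
    have hdR : (0:ℝ) < d := by exact_mod_cast hdpos
    nlinarith
end

section
/- Let S be a finite nonempty subset of ℚ^n and let ν ∈ ℚ^n. Then ν lies in the interior of the convex hull of S in ℝ^n if and only if for every nonzero ξ ∈ ℤ^n there exists χ ∈ S with ⟨χ − ν, ξ⟩ < 0, where ⟨·,·⟩ denotes the standard inner product on ℝ^n. (This is the lattice form of the Hilbert–Mumford criterion for stability under a torus action: a point with weight support S is stable for the linearization shifted by the character ν iff ν lies in the interior of the weight polytope conv(S).) -/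
open Matrix

namespace HM

lemma dotProduct_sumF {α ι m : Type*} [Fintype m] [CommRing α] (u : m → α) (s : Finset ι)
    (f : ι → m → α) : u ⬝ᵥ (∑ j ∈ s, f j) = ∑ j ∈ s, u ⬝ᵥ f j := by
  simp only [dotProduct, Finset.sum_apply, Finset.mul_sum]
  rw [Finset.sum_comm]

lemma sumF_dotProduct {α ι m : Type*} [Fintype m] [CommRing α] (u : m → α) (s : Finset ι)
    (f : ι → m → α) : (∑ j ∈ s, f j) ⬝ᵥ u = ∑ j ∈ s, f j ⬝ᵥ u := by
  simp only [dotProduct, Finset.sum_apply, Finset.sum_mul]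
  rw [Finset.sum_comm]

variable {n : ℕ}

/-- Gram-Schmidt orthogonalization (without normalization) over `ℚ`. -/
def gs (v : ℕ → (Fin n → ℚ)) : ℕ → (Fin n → ℚ)
  | i => v i - ∑ j : Fin i, ((gs v j ⬝ᵥ v i) / (gs v j ⬝ᵥ gs v j)) • gs v j
  termination_by i => i
  decreasing_by exact j.isLt

lemma gs_def (v : ℕ → (Fin n → ℚ)) (i : ℕ) :
    gs v i = v i - ∑ j : Fin i, ((gs v j ⬝ᵥ v i) / (gs v j ⬝ᵥ gs v j)) • gs v j := by
  rw [gs]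

/-- the key cancellation -/
lemma gs_cancel (u x : Fin n → ℚ) : u ⬝ᵥ ((u ⬝ᵥ x / (u ⬝ᵥ u)) • u) = u ⬝ᵥ x := by
  rcases eq_or_ne (u ⬝ᵥ u) 0 with h | h
  · have hu : u = 0 := dotProduct_self_eq_zero.mp h
    subst hu; simp
  · rw [dotProduct_smul, smul_eq_mul]; field_simp

lemma gs_orth (v : ℕ → (Fin n → ℚ)) : ∀ i j, j < i → gs v j ⬝ᵥ gs v i = 0 := by
  intro i
  induction i using Nat.strong_induction_on with
  | _ i IH =>
    intro j hj
    rw [gs_def v i, dotProduct_sub, dotProduct_sumF]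
    have hsum : ∑ m : Fin i, gs v j ⬝ᵥ ((gs v m ⬝ᵥ v i / (gs v m ⬝ᵥ gs v m)) • gs v m)
        = gs v j ⬝ᵥ v i := by
      rw [Finset.sum_eq_single ⟨j, hj⟩]
      · rw [show gs v j ⬝ᵥ v i / _ = gs v j ⬝ᵥ v i / (gs v j ⬝ᵥ gs v j) from rfl, gs_cancel]
      · intro m _ hm
        have hmj : (m : ℕ) ≠ j := fun h => hm (by ext; exact h)
        have horth : gs v j ⬝ᵥ gs v m = 0 := by
          rcases lt_or_gt_of_ne hmj with h1 | h1
          · rw [dotProduct_comm]; exact IH j hj m h1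
          · exact IH m m.isLt j h1
        rw [dotProduct_smul, horth, smul_eq_mul, mul_zero]
      · intro h; exact absurd (Finset.mem_univ _) h
    rw [hsum, sub_self]

lemma gs_orth' (v : ℕ → (Fin n → ℚ)) {i j : ℕ} (h : i ≠ j) : gs v j ⬝ᵥ gs v i = 0 := by
  rcases lt_or_gt_of_ne h with h1 | h1
  · rw [dotProduct_comm]; exact gs_orth v j i h1
  · exact gs_orth v i j h1

/-- complement of projection onto the span of the first `k` vectors, over ℚ -/
def qproj (v : ℕ → (Fin n → ℚ)) (k : ℕ) (x : Fin n → ℚ) : Fin n → ℚ :=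
  x - ∑ j : Fin k, ((gs v j ⬝ᵥ x) / (gs v j ⬝ᵥ gs v j)) • gs v j

lemma gs_dot_qproj (v : ℕ → (Fin n → ℚ)) (k : ℕ) (x : Fin n → ℚ) {j : ℕ} (hj : j < k) :
    gs v j ⬝ᵥ qproj v k x = 0 := by
  rw [qproj, dotProduct_sub, dotProduct_sumF]
  rw [Finset.sum_eq_single ⟨j, hj⟩]
  · rw [show gs v j ⬝ᵥ x / _ = gs v j ⬝ᵥ x / (gs v j ⬝ᵥ gs v j) from rfl, gs_cancel, sub_self]
  · intro m _ hm
    have hmj : (m : ℕ) ≠ j := fun h => hm (by ext; exact h)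
    rw [dotProduct_smul, gs_orth' v hmj, smul_eq_mul, mul_zero]
  · intro h; exact absurd (Finset.mem_univ _) h

lemma v_eq_gs_add (v : ℕ → (Fin n → ℚ)) (i : ℕ) :
    v i = gs v i + ∑ j : Fin i, ((gs v j ⬝ᵥ v i) / (gs v j ⬝ᵥ gs v j)) • gs v j := by
  rw [gs_def]; ring

lemma v_dot_qproj (v : ℕ → (Fin n → ℚ)) (k : ℕ) (x : Fin n → ℚ) {m : ℕ} (hm : m < k) :
    v m ⬝ᵥ qproj v k x = 0 := by
  rw [v_eq_gs_add v m, add_dotProduct, sumF_dotProduct, gs_dot_qproj v k x hm]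
  rw [Finset.sum_eq_zero, add_zero]
  intro j _
  rw [smul_dotProduct, gs_dot_qproj v k x (j.isLt.trans hm), smul_eq_mul, mul_zero]

lemma gs_mem_span (v : ℕ → (Fin n → ℚ)) (k : ℕ) {i : ℕ} (hi : i < k) :
    gs v i ∈ Submodule.span ℚ (Set.range fun m : Fin k => v m) := by
  induction i using Nat.strong_induction_on with
  | _ i IH =>
    rw [gs_def]
    refine sub_mem (Submodule.subset_span ⟨⟨i, hi⟩, rfl⟩) (Submodule.sum_mem _ fun j _ => ?_)
    exact Submodule.smul_mem _ _ (IH j j.isLt (j.isLt.trans hi))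

lemma exists_ortho (v : ℕ → (Fin n → ℚ)) (k : ℕ)
    (h : Submodule.span ℚ (Set.range fun m : Fin k => v m) ≠ ⊤) :
    ∃ q : Fin n → ℚ, q ≠ 0 ∧ ∀ m < k, v m ⬝ᵥ q = 0 := by
  obtain ⟨w, hw⟩ : ∃ w, w ∉ Submodule.span ℚ (Set.range fun m : Fin k => v m) := by
    by_contra hc; push_neg at hc
    exact h (Submodule.eq_top_iff'.mpr hc)
  refine ⟨qproj v k w, fun h0 => hw ?_, fun m hm => v_dot_qproj v k w hm⟩
  have : w = ∑ j : Fin k, ((gs v j ⬝ᵥ w) / (gs v j ⬝ᵥ gs v j)) • gs v j := by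
    have h1 := sub_eq_zero.mp h0
    linear_combination (norm := module) h1
  rw [this]
  exact Submodule.sum_mem _ fun j _ => Submodule.smul_mem _ _ (gs_mem_span v k j.isLt)

/-- cast to the reals -/
def rc (q : Fin n → ℚ) : Fin n → ℝ := fun j => (q j : ℝ)

lemma rc_dot (a b : Fin n → ℚ) : rc a ⬝ᵥ rc b = ((a ⬝ᵥ b : ℚ) : ℝ) := by
  simp [dotProduct, rc]

lemma rc_sub (a b : Fin n → ℚ) : rc (a - b) = rc a - rc b := by
  funext j; simp [rc]

lemma rc_smul (c : ℚ) (a : Fin n → ℚ) : rc (c • a) = (c : ℝ) • rc a := by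
  funext j; simp [rc]

lemma rc_sum {ι : Type*} (s : Finset ι) (f : ι → Fin n → ℚ) :
    rc (∑ j ∈ s, f j) = ∑ j ∈ s, rc (f j) := by
  funext j; simp [rc]

lemma span_rc {s : Set (Fin n → ℚ)} {x : Fin n → ℚ} (hx : x ∈ Submodule.span ℚ s) :
    rc x ∈ Submodule.span ℝ (rc '' s) := by
  induction hx using Submodule.span_induction with
  | mem y hy => exact Submodule.subset_span ⟨y, hy, rfl⟩
  | zero => have : rc (0 : Fin n → ℚ) = 0 := by funext j; simp [rc]
            rw [this]; exact zero_mem _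
  | add y z _ _ hy hz =>
      have : rc (y + z) = rc y + rc z := by funext j; simp [rc]
      rw [this]; exact add_mem hy hz
  | smul c y _ hy => rw [rc_smul]; exact Submodule.smul_mem _ _ hy

/-- real version of the projection complement -/
noncomputable def rproj (v : ℕ → (Fin n → ℚ)) (k : ℕ) (y : Fin n → ℝ) : Fin n → ℝ :=
  y - ∑ j : Fin k, ((rc (gs v j) ⬝ᵥ y) / ((gs v j ⬝ᵥ gs v j : ℚ) : ℝ)) • rc (gs v j)

lemma rc_qproj (v : ℕ → (Fin n → ℚ)) (k : ℕ) (x : Fin n → ℚ) :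
    rc (qproj v k x) = rproj v k (rc x) := by
  rw [qproj, rproj, rc_sub, rc_sum]
  congr 1
  refine Finset.sum_congr rfl fun j _ => ?_
  rw [rc_smul, rc_dot]
  push_cast
  rfl

lemma gs_dot_y (v : ℕ → (Fin n → ℚ)) (k : ℕ) (y : Fin n → ℝ)
    (hy : ∀ m < k, rc (v m) ⬝ᵥ y = 0) : ∀ i < k, rc (gs v i) ⬝ᵥ y = 0 := by
  intro i
  induction i using Nat.strong_induction_on with
  | _ i IH =>
    intro hik
    rw [gs_def, rc_sub, rc_sum, sub_dotProduct, sumF_dotProduct, hy i hik]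
    rw [Finset.sum_eq_zero, sub_self]
    intro j _
    rw [rc_smul, smul_dotProduct, IH j j.isLt (j.isLt.trans hik), smul_eq_mul, mul_zero]

lemma rproj_eq_self (v : ℕ → (Fin n → ℚ)) (k : ℕ) (y : Fin n → ℝ)
    (hy : ∀ i < k, rc (gs v i) ⬝ᵥ y = 0) : rproj v k y = y := by
  rw [rproj, Finset.sum_eq_zero, sub_zero]
  intro j _
  rw [hy j j.isLt, zero_div, zero_smul]

lemma rproj_continuous (v : ℕ → (Fin n → ℚ)) (k : ℕ) : Continuous (rproj v k) := by
  refine continuous_id.sub (continuous_finset_sum _ fun j _ => Continuous.fun_smul ?_ continuous_const)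
  refine Continuous.div_const ?_ _
  unfold dotProduct
  exact continuous_finset_sum _ fun l _ => (continuous_const.mul (continuous_apply l))

/-- Rational points are dense in the real solution space of a rational homogeneous system. -/
lemma dense_ker (v : ℕ → (Fin n → ℚ)) (k : ℕ) (y : Fin n → ℝ)
    (hy : ∀ m < k, rc (v m) ⬝ᵥ y = 0) {ε : ℝ} (hε : 0 < ε) :
    ∃ q : Fin n → ℚ, (∀ m < k, v m ⬝ᵥ q = 0) ∧ ∀ j, |rc q j - y j| < ε := by
  have hopen : IsOpen {z : Fin n → ℝ | ∀ j, |rproj v k z j - y j| < ε} := by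
    have : {z : Fin n → ℝ | ∀ j, |rproj v k z j - y j| < ε} =
        ⋂ j, {z | |rproj v k z j - y j| < ε} := by ext z; simp
    rw [this]
    refine isOpen_iInter_of_finite fun j => ?_
    have hc : Continuous fun z => |rproj v k z j - y j| :=
      (((continuous_apply j).comp (rproj_continuous v k)).sub continuous_const).abs
    exact isOpen_lt hc continuous_const
  have hmem : y ∈ {z : Fin n → ℝ | ∀ j, |rproj v k z j - y j| < ε} := by
    rw [Set.mem_setOf_eq, rproj_eq_self v k y (gs_dot_y v k y hy)]
    intro j; simpa using hε
  obtain ⟨δ, hδ, hball⟩ := Metric.isOpen_iff.mp hopen y hmem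
  choose q hq using fun j => exists_rat_near (y j) hδ
  refine ⟨qproj v k q, fun m hm => v_dot_qproj v k q hm, fun j => ?_⟩
  have hqball : rc q ∈ Metric.ball y δ := by
    rw [Metric.mem_ball, dist_pi_lt_iff hδ]
    intro j
    rw [Real.dist_eq, abs_sub_comm]
    exact hq j
  have h2 := hball hqball j
  rwa [← rc_qproj] at h2

lemma abs_dot_le (a z : Fin n → ℝ) : |a ⬝ᵥ z| ≤ ∑ j, |a j| * |z j| := by
  refine (Finset.abs_sum_le_sum_abs _ _).trans ?_
  refine Finset.sum_le_sum fun j _ => ?_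
  rw [abs_mul]

/-- scaling a rational vector to an integral one -/
lemma int_scale (S : Finset (Fin n → ℚ)) (ν : Fin n → ℚ) (q : Fin n → ℚ) (hq0 : q ≠ 0)
    (hqS : ∀ χ ∈ S, 0 ≤ (χ - ν) ⬝ᵥ q) :
    ∃ ξ : Fin n → ℤ, ξ ≠ 0 ∧ ∀ χ ∈ S, 0 ≤ rc (χ - ν) ⬝ᵥ (fun j => (ξ j : ℝ)) := by
  set D : ℤ := ∏ j, ((q j).den : ℤ) with hD
  have hDpos : 0 < D := Finset.prod_pos fun j _ => by exact_mod_cast (q j).pos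
  have hcast : ∀ j, ∃ m : ℤ, (m : ℚ) = q j * (D : ℚ) := by
    intro j
    obtain ⟨c, hc⟩ := Finset.dvd_prod_of_mem (fun j => ((q j).den : ℤ)) (Finset.mem_univ j)
    refine ⟨(q j).num * c, ?_⟩
    have hden : ((q j).den : ℚ) ≠ 0 := by exact_mod_cast (q j).den_nz
    have hnum : ((q j).num : ℚ) = q j * ((q j).den : ℚ) :=
      (div_eq_iff hden).mp (Rat.num_div_den (q j))
    rw [hD, hc]
    push_cast
    rw [hnum]; ring
  choose ξ hξ using hcast
  have hξR : ∀ j, (ξ j : ℝ) = (q j : ℝ) * (D : ℝ) := by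
    intro j
    have := congrArg (fun x : ℚ => (x : ℝ)) (hξ j)
    push_cast at this
    exact this
  refine ⟨ξ, ?_, ?_⟩
  · obtain ⟨j, hj⟩ := Function.ne_iff.mp hq0
    intro h0
    apply hj
    have h1 := hξ j
    rw [congrFun h0 j] at h1
    have hD0 : (D : ℚ) ≠ 0 := by exact_mod_cast hDpos.ne'
    field_simp at h1
    simp only [Pi.zero_apply, Int.cast_zero] at h1 ⊢
    exact (mul_eq_zero.mp h1.symm).resolve_right hD0
  · intro χ hχ
    have h1 : rc (χ - ν) ⬝ᵥ (fun j => (ξ j : ℝ)) = (((χ - ν) ⬝ᵥ q : ℚ) : ℝ) * (D : ℝ) := by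
      simp only [dotProduct, rc]
      push_cast
      rw [Finset.sum_mul]
      refine Finset.sum_congr rfl fun j _ => ?_
      rw [hξR j]; ring
    rw [h1]
    have h2 : (0 : ℝ) ≤ (((χ - ν) ⬝ᵥ q : ℚ) : ℝ) := by exact_mod_cast hqS χ hχ
    have h3 : (0 : ℝ) ≤ (D : ℝ) := by exact_mod_cast hDpos.le
    positivity


lemma dot_linear (w : Fin n → ℝ) : IsLinearMap ℝ (fun x : Fin n → ℝ => x ⬝ᵥ w) :=
  ⟨fun x y => add_dotProduct x y w, fun c x => smul_dotProduct c x w⟩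

lemma forward {S : Finset (Fin n → ℚ)} {ν : Fin n → ℚ}
    (hint : rc ν ∈ interior (convexHull ℝ (rc '' ↑S)))
    (ξ : Fin n → ℤ) (hξ : ξ ≠ 0) :
    ∃ χ ∈ S, rc (χ - ν) ⬝ᵥ (fun j => (ξ j : ℝ)) < 0 := by
  by_contra hc
  push_neg at hc
  set w : Fin n → ℝ := fun j => (ξ j : ℝ) with hw
  have hw0 : ∃ j, w j ≠ 0 := by
    obtain ⟨j, hj⟩ := Function.ne_iff.mp hξ
    exact ⟨j, by simpa [hw] using fun h => hj (by exact_mod_cast h)⟩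
  have hsub : convexHull ℝ (rc '' ↑S) ⊆ {x | rc ν ⬝ᵥ w ≤ x ⬝ᵥ w} := by
    apply convexHull_min
    · rintro x ⟨χ, hχ, rfl⟩
      have h1 := hc χ hχ
      rw [rc_sub, sub_dotProduct] at h1
      rw [Set.mem_setOf_eq]
      linarith
    · exact convex_halfSpace_ge (dot_linear w) _
  obtain ⟨ε, hε, hball⟩ := Metric.isOpen_iff.mp isOpen_interior _ hint
  have hwn : (0:ℝ) < ‖w‖ + 1 := by positivity
  set δ : ℝ := ε / (‖w‖ + 1) with hδdef
  have hδ : 0 < δ := by positivity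
  have hp : rc ν - δ • w ∈ Metric.ball (rc ν) ε := by
    rw [Metric.mem_ball, dist_eq_norm]
    have : rc ν - δ • w - rc ν = -(δ • w) := by abel
    rw [this, norm_neg, norm_smul, Real.norm_eq_abs, abs_of_pos hδ]
    calc δ * ‖w‖ < δ * (‖w‖ + 1) := by nlinarith
    _ = ε := by rw [hδdef]; field_simp
  have hmem := hsub (interior_subset (hball hp))
  rw [Set.mem_setOf_eq, sub_dotProduct, smul_dotProduct] at hmem
  have hww : 0 < w ⬝ᵥ w := by
    obtain ⟨j, hj⟩ := hw0
    refine Finset.sum_pos' (fun i _ => mul_self_nonneg _) ⟨j, Finset.mem_univ j, ?_⟩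
    rcases lt_or_gt_of_ne hj with h1 | h1
    · exact mul_pos_of_neg_of_neg h1 h1
    · exact mul_pos h1 h1
  rw [smul_eq_mul] at hmem
  nlinarith

lemma exists_q (S : Finset (Fin n → ℚ)) (ν : Fin n → ℚ) (hS : S.Nonempty)
    (hni : rc ν ∉ interior (convexHull ℝ (rc '' ↑S))) :
    ∃ q : Fin n → ℚ, q ≠ 0 ∧ ∀ χ ∈ S, 0 ≤ (χ - ν) ⬝ᵥ q := by
  classical
  obtain ⟨χ₀, hχ₀⟩ := hS
  set k₁ := S.card with hk₁
  set e := S.equivFin with he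
  set v₁ : ℕ → (Fin n → ℚ) :=
    fun m => if h : m < k₁ then ((e.symm ⟨m, h⟩ : {x // x ∈ S}) : Fin n → ℚ) - χ₀ else 0 with hv₁
  have hv₁mem : ∀ χ (hχ : χ ∈ S), ∃ m, m < k₁ ∧ v₁ m = χ - χ₀ := by
    intro χ hχ
    refine ⟨(e ⟨χ, hχ⟩ : Fin k₁), (e ⟨χ, hχ⟩).isLt, ?_⟩
    simp only [hv₁]
    rw [dif_pos (e ⟨χ, hχ⟩).isLt]
    congr
    rw [show (⟨(e ⟨χ, hχ⟩ : Fin k₁), (e ⟨χ, hχ⟩).isLt⟩ : Fin k₁) = e ⟨χ, hχ⟩ from rfl,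
      Equiv.symm_apply_apply]
  by_cases hW : Submodule.span ℚ (Set.range fun m : Fin k₁ => v₁ m) = ⊤
  · -- full dimensional case
    have hC : Convex ℝ (convexHull ℝ (rc '' (S : Set (Fin n → ℚ)))) := convex_convexHull ℝ _
    -- the convex hull has nonempty interior
    have hio : (interior (convexHull ℝ (rc '' (S : Set (Fin n → ℚ))))).Nonempty := by
      rw [hC.interior_nonempty_iff_affineSpan_eq_top, affineSpan_convexHull]
      have hne : (rc '' (S : Set (Fin n → ℚ))).Nonempty := ⟨rc χ₀, ⟨χ₀, hχ₀, rfl⟩⟩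
      rw [AffineSubspace.affineSpan_eq_top_iff_vectorSpan_eq_top_of_nonempty ℝ (Fin n → ℝ)
        (Fin n → ℝ) hne]
      rw [eq_top_iff]
      intro x _
      have hsb : Submodule.span ℝ (rc '' (Set.range fun m : Fin k₁ => v₁ m)) ≤
          vectorSpan ℝ (rc '' (S : Set (Fin n → ℚ))) := by
        rw [Submodule.span_le]
        rintro y ⟨d, ⟨m, rfl⟩, rfl⟩
        have hm : (m : ℕ) < k₁ := m.isLt
        have hvm : v₁ (m : ℕ) = ((e.symm ⟨m, hm⟩ : {x // x ∈ S}) : Fin n → ℚ) - χ₀ := by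
          simp only [hv₁]
          rw [dif_pos hm]
        rw [show (fun m : Fin k₁ => v₁ m) m = v₁ (m : ℕ) from rfl, hvm, rc_sub]
        exact vsub_mem_vectorSpan ℝ ⟨_, (e.symm ⟨m, hm⟩).2, rfl⟩ ⟨χ₀, hχ₀, rfl⟩
      apply hsb
      have hx : x = ∑ i, (x i) • fun l => if i = l then (1 : ℝ) else 0 := pi_eq_sum_univ x
      rw [hx]
      refine Submodule.sum_mem _ fun i _ => Submodule.smul_mem _ _ ?_
      have h1 : (fun l => if i = l then (1 : ℚ) else 0) ∈
          Submodule.span ℚ (Set.range fun m : Fin k₁ => v₁ m) := hW ▸ Submodule.mem_top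
      have h2 := span_rc h1
      have h3 : rc (fun l => if i = l then (1 : ℚ) else 0) =
          fun l => if i = l then (1 : ℝ) else 0 := by
        funext l; simp [rc, apply_ite]
      rwa [h3] at h2
    obtain ⟨x₀, hx₀⟩ := hio
    obtain ⟨f, hf⟩ := geometric_hahn_banach_open_point hC.interior isOpen_interior hni
    -- every point of the hull satisfies f x ≤ f (rc ν)
    have hfle : ∀ x ∈ convexHull ℝ (rc '' (S : Set (Fin n → ℚ))), f x ≤ f (rc ν) := by
      intro x hx
      by_contra hgt
      push_neg at hgt
      set d : ℝ := f x - f (rc ν) with hd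
      have hd0 : 0 < d := by simp only [hd]; linarith
      set B : ℝ := |f x₀ - f x| with hB
      set t : ℝ := min 1 (d / (2 * (B + 1))) with ht
      have hB0 : 0 ≤ B := abs_nonneg _
      have ht0 : 0 < t := lt_min one_pos (by positivity)
      have ht1 : t ≤ 1 := min_le_left _ _
      have hz := hC.combo_interior_self_mem_interior hx₀ hx ht0 (by linarith : (0:ℝ) ≤ 1 - t)
        (by ring)
      have hlt := hf _ hz
      rw [map_add, f.map_smul, f.map_smul, smul_eq_mul, smul_eq_mul] at hlt
      have h2 : t * (-B) ≤ t * (f x₀ - f x) := by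
        have := neg_abs_le (f x₀ - f x)
        exact mul_le_mul_of_nonneg_left (by simpa [hB] using this) ht0.le
      have h3 : t * B ≤ t * (B + 1) := mul_le_mul_of_nonneg_left (by linarith) ht0.le
      have h4 : t * (B + 1) ≤ (d / (2 * (B + 1))) * (B + 1) :=
        mul_le_mul_of_nonneg_right (min_le_right _ _) (by positivity)
      have h5 : (d / (2 * (B + 1))) * (B + 1) = d / 2 := by field_simp
      nlinarith
    -- represent the functional by a vector
    have hrep : ∀ x : Fin n → ℝ, f x = ∑ j, x j * f (fun l => if j = l then 1 else 0) := by
      intro x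
      conv_lhs => rw [pi_eq_sum_univ x]
      rw [map_sum]
      refine Finset.sum_congr rfl fun j _ => ?_
      rw [f.map_smul, smul_eq_mul]
    set w : Fin n → ℝ := fun j => -(f (fun l => if j = l then 1 else 0)) with hwdef
    have hdotw : ∀ x : Fin n → ℝ, x ⬝ᵥ w = -(f x) := by
      intro x
      rw [hrep x, dotProduct, ← Finset.sum_neg_distrib]
      refine Finset.sum_congr rfl fun j _ => ?_
      simp [hwdef]
    have hwS : ∀ χ ∈ S, 0 ≤ rc (χ - ν) ⬝ᵥ w := by
      intro χ hχ
      have h1 := hfle (rc χ) (subset_convexHull ℝ _ ⟨χ, hχ, rfl⟩)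
      rw [rc_sub, sub_dotProduct, hdotw, hdotw]
      linarith
    have hw0 : w ≠ 0 := by
      intro h0
      have h1 := hf x₀ hx₀
      have h2 : ∀ x : Fin n → ℝ, f x = 0 := by
        intro x
        have h3 := hdotw x
        rw [h0, dotProduct_zero] at h3
        linarith
      rw [h2, h2] at h1
      exact lt_irrefl _ h1
    -- the face of tight weights
    obtain ⟨j₀, hj₀⟩ := Function.ne_iff.mp hw0
    set F : Finset (Fin n → ℚ) := S.filter (fun χ => rc (χ - ν) ⬝ᵥ w = 0) with hF
    set G : Finset (Fin n → ℚ) := S.filter (fun χ => ¬ (rc (χ - ν) ⬝ᵥ w = 0)) with hG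
    have hGpos : ∀ χ ∈ G, 0 < rc (χ - ν) ⬝ᵥ w := by
      intro χ hχ
      obtain ⟨h1, h2⟩ := Finset.mem_filter.mp hχ
      exact lt_of_le_of_ne (hwS χ h1) (Ne.symm h2)
    set k₂ := F.card with hk₂
    set e₂ := F.equivFin with he₂
    set v₂ : ℕ → (Fin n → ℚ) :=
      fun m => if h : m < k₂ then ((e₂.symm ⟨m, h⟩ : {x // x ∈ F}) : Fin n → ℚ) - ν else 0
      with hv₂
    have hyv : ∀ m < k₂, rc (v₂ m) ⬝ᵥ w = 0 := by
      intro m hm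
      simp only [hv₂]
      rw [dif_pos hm]
      exact (Finset.mem_filter.mp (e₂.symm ⟨m, hm⟩).2).2
    set εG : ℝ := if hGne : G.Nonempty then
        G.inf' hGne (fun χ => (rc (χ - ν) ⬝ᵥ w) / ((∑ j, |rc (χ - ν) j|) + 1)) else 1 with hεG
    have hεGpos : 0 < εG := by
      rw [hεG]
      split_ifs with hGne
      · rw [Finset.lt_inf'_iff]
        intro χ hχ
        have := hGpos χ hχ
        positivity
      · exact one_pos
    set ε := min |w j₀| εG with hε
    have hεpos : 0 < ε := lt_min (abs_pos.mpr hj₀) hεGpos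
    obtain ⟨q, hqker, hqnear⟩ := dense_ker v₂ k₂ w hyv hεpos
    refine ⟨q, ?_, ?_⟩
    · intro h0
      have h1 : |w j₀| < ε := by simpa [h0, rc] using hqnear j₀
      exact absurd h1 (not_lt.mpr (min_le_left _ _))
    · intro χ hχ
      by_cases hface : rc (χ - ν) ⬝ᵥ w = 0
      · have hχF : χ ∈ F := Finset.mem_filter.mpr ⟨hχ, hface⟩
        have hm : ((e₂ ⟨χ, hχF⟩ : Fin k₂) : ℕ) < k₂ := (e₂ ⟨χ, hχF⟩).isLt
        have h1 := hqker _ hm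
        have hveq : v₂ ((e₂ ⟨χ, hχF⟩ : Fin k₂) : ℕ) = χ - ν := by
          simp only [hv₂]
          rw [dif_pos hm]
          congr
          rw [show (⟨((e₂ ⟨χ, hχF⟩ : Fin k₂) : ℕ), hm⟩ : Fin k₂) = e₂ ⟨χ, hχF⟩ from rfl,
            Equiv.symm_apply_apply]
        rw [hveq] at h1
        rw [h1]
      · have hχG : χ ∈ G := Finset.mem_filter.mpr ⟨hχ, hface⟩
        have hGne : G.Nonempty := ⟨χ, hχG⟩
        have haw : 0 < rc (χ - ν) ⬝ᵥ w := hGpos χ hχG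
        set a := rc (χ - ν) with ha
        set M : ℝ := ∑ j, |a j| with hM
        have hM0 : 0 ≤ M := Finset.sum_nonneg fun j _ => abs_nonneg _
        have hbound : |a ⬝ᵥ (rc q - w)| ≤ M * ε := by
          refine (abs_dot_le a _).trans ?_
          rw [hM, Finset.sum_mul]
          refine Finset.sum_le_sum fun j _ => ?_
          have h4 := (hqnear j).le
          exact mul_le_mul_of_nonneg_left (by simpa using h4) (abs_nonneg _)
        have hεle : ε ≤ (a ⬝ᵥ w) / (M + 1) := by
          refine (min_le_right _ _).trans ?_
          rw [hεG, dif_pos hGne]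
          exact Finset.inf'_le _ hχG
        have hlt2 : M * ε < a ⬝ᵥ w := by
          have h6 : M * ε ≤ M * ((a ⬝ᵥ w) / (M + 1)) := mul_le_mul_of_nonneg_left hεle hM0
          have h7 : M * ((a ⬝ᵥ w) / (M + 1)) < a ⬝ᵥ w := by
            rw [← mul_div_assoc, div_lt_iff₀ (by positivity : (0:ℝ) < M + 1)]
            nlinarith
          linarith
        have hpos : 0 < a ⬝ᵥ rc q := by
          have hsplit : a ⬝ᵥ rc q = a ⬝ᵥ w + a ⬝ᵥ (rc q - w) := by
            rw [dotProduct_sub]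
            ring
          have h8 := (abs_le.mp hbound).1
          rw [hsplit]
          linarith
        rw [ha, rc_dot] at hpos
        exact_mod_cast hpos.le
  · -- degenerate case: rational normal to the affine hull of S
    obtain ⟨q, hq0, hqd⟩ := exists_ortho v₁ k₁ hW
    have hdiff : ∀ χ ∈ S, (χ - χ₀) ⬝ᵥ q = 0 := by
      intro χ hχ
      obtain ⟨m, hm, hvm⟩ := hv₁mem χ hχ
      rw [← hvm]
      exact hqd m hm
    have hexpand : ∀ χ : Fin n → ℚ, (χ - ν) ⬝ᵥ q = (χ - χ₀) ⬝ᵥ q + (χ₀ - ν) ⬝ᵥ q := by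
      intro χ
      rw [← add_dotProduct]
      congr 1
      abel
    rcases le_or_gt 0 ((χ₀ - ν) ⬝ᵥ q) with hc | hc
    · refine ⟨q, hq0, fun χ hχ => ?_⟩
      rw [hexpand, hdiff χ hχ, zero_add]
      exact hc
    · refine ⟨-q, neg_ne_zero.mpr hq0, fun χ hχ => ?_⟩
      rw [dotProduct_neg, hexpand, hdiff χ hχ, zero_add]
      linarith

end HM

/-- **Lattice form of the Hilbert–Mumford criterion for stability under a torus action.**
Let `S` be a finite nonempty set of rational vectors in `ℚ^n` and `ν ∈ ℚ^n`.  Then `ν` lies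
in the interior of the convex hull of `S` in `ℝ^n` iff for every nonzero integral `ξ ∈ ℤ^n`
there is `χ ∈ S` with `⟨χ − ν, ξ⟩ < 0` for the standard inner product. -/
theorem statement11 (n : ℕ) (S : Finset (Fin n → ℚ)) (hS : S.Nonempty) (ν : Fin n → ℚ) :
    ((fun j => (ν j : ℝ)) ∈
      interior (convexHull ℝ {x : Fin n → ℝ | ∃ χ ∈ S, x = fun j => (χ j : ℝ)})) ↔
    ∀ ξ : Fin n → ℤ, ξ ≠ 0 → ∃ χ ∈ S, (∑ j, ((χ j : ℝ) - (ν j : ℝ)) * (ξ j : ℝ)) < 0 := by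
  classical
  have hset : {x : Fin n → ℝ | ∃ χ ∈ S, x = fun j => (χ j : ℝ)} = HM.rc '' ↑S := by
    ext x
    constructor
    · rintro ⟨χ, hχ, rfl⟩; exact ⟨χ, hχ, rfl⟩
    · rintro ⟨χ, hχ, rfl⟩; exact ⟨χ, hχ, rfl⟩
  have hsum : ∀ (χ : Fin n → ℚ) (ξ : Fin n → ℤ),
      (∑ j, ((χ j : ℝ) - (ν j : ℝ)) * (ξ j : ℝ)) =
        HM.rc (χ - ν) ⬝ᵥ (fun j => (ξ j : ℝ)) := by
    intro χ ξ
    refine Finset.sum_congr rfl fun j _ => ?_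
    simp [HM.rc]
  have hν : (fun j => (ν j : ℝ)) = HM.rc ν := rfl
  rw [hset, hν]
  constructor
  · intro hint ξ hξ
    obtain ⟨χ, hχ, hlt⟩ := HM.forward hint ξ hξ
    exact ⟨χ, hχ, by rw [hsum]; exact hlt⟩
  · intro h
    by_contra hni
    obtain ⟨q, hq0, hqS⟩ := HM.exists_q S ν hS hni
    obtain ⟨ξ, hξ0, hξS⟩ := HM.int_scale S ν q hq0 hqS
    obtain ⟨χ, hχ, hlt⟩ := h ξ hξ0
    rw [hsum] at hlt
    exact absurd hlt (not_lt.mpr (hξS χ hχ))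
end
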